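/- Let h: [n] → [n] be a Hessenberg function, let 1 ≤ s ≤ p(h) where p(h) := min{m : h(m) = m}, and let r_s := min{m : h(m) ≥ s}. Let h^{(s)}: [n-1] → [n-1] be defined by h^{(s)}(m) = h(m) for m ≤ r_s - 1, h(m) - 1 for r_s ≤ m ≤ s-1, and h(m+1) - 1 for s ≤ m ≤ n-1. Then the ring homomorphism φ: ℚ[x_1,...,x_n] → ℚ[y_1,...,y_{n-1}] sending x_m ↦ y_m for m < s, x_s ↦ 0, and x_m ↦ y_{m-1} for m > s, induces a ring isomorphism A^h_s/⟨x_s⟩ ≅ A^{h^{(s)}}_{r_s}, where A^h_s := ℚ[x]/⟨g_{h(1),1},...,g_{h(s-1),s-1}, f_{h(s),s},...,f_{h(n),n}⟩ and A^{h^{(s)}}_{r_s} := ℚ[y]/⟨g_{h^{(s)}(1),1},...,g_{h^{(s)}(r_s-1),r_s-1}, f_{h^{(s)}(r_s),r_s},...,f_{h^{(s)}(n-1),n-1}⟩. -/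

import Mathlib

open MvPolynomial

/-- The variable `x_m` (1-indexed) in `ℚ[x_1,…,x_n]`. -/
noncomputable def xv (n : ℕ) (m : ℕ) : MvPolynomial (Fin n) ℚ :=
  if h : m - 1 < n then X ⟨m - 1, h⟩ else 0

/-- `f_{i,j} = ∑_{k=1}^{j} (∏_{ℓ=j+1}^{i} (x_k - x_ℓ)) x_k`. -/
noncomputable def fpoly (n i j : ℕ) : MvPolynomial (Fin n) ℚ :=
  ∑ k ∈ Finset.Icc 1 j, (∏ l ∈ Finset.Icc (j+1) i, (xv n k - xv n l)) * xv n k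

/-- `g_{i,j} = ∑_{k=1}^{j} ∏_{ℓ=j+1}^{i} (x_k - x_ℓ)`. -/
noncomputable def gpoly (n i j : ℕ) : MvPolynomial (Fin n) ℚ :=
  ∑ k ∈ Finset.Icc 1 j, ∏ l ∈ Finset.Icc (j+1) i, (xv n k - xv n l)

/-- `h` is a Hessenberg function on `{1,…,n}`. -/
def IsHessenberg (n : ℕ) (h : ℕ → ℕ) : Prop :=
  (∀ i, 1 ≤ i → i ≤ n → i ≤ h i ∧ h i ≤ n) ∧
  (∀ i, 1 ≤ i → i < n → h i ≤ h (i + 1))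

/-- The substitution `x_m ↦ y_m` (`m < s`), `x_s ↦ 0`, `x_m ↦ y_{m-1}` (`m > s`). -/
noncomputable def phiMap (n s : ℕ) :
    MvPolynomial (Fin n) ℚ →ₐ[ℚ] MvPolynomial (Fin (n - 1)) ℚ :=
  MvPolynomial.aeval fun k : Fin n =>
    if k.val + 1 < s then xv (n - 1) (k.val + 1)
    else if k.val + 1 = s then 0
    else xv (n - 1) k.val


section HessAux

lemma Icc_one (j : ℕ) : Finset.Icc 1 j = Finset.Ioc 0 j := by
  ext x; simp [Nat.lt_iff_add_one_le]

lemma Icc_pred {a : ℕ} (b : ℕ) (ha : 1 ≤ a) : Finset.Icc a b = Finset.Ioc (a-1) b := by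
  ext x; simp; omega

lemma Ioc_pred_singleton {j : ℕ} (hj : 1 ≤ j) : Finset.Ioc (j-1) j = {j} := by
  ext x; simp; omega

lemma gpoly_zero (N i : ℕ) : gpoly N i 0 = 0 := by simp [gpoly]
lemma fpoly_zero (N i : ℕ) : fpoly N i 0 = 0 := by simp [fpoly]

lemma prod_shift {M : Type*} [CommMonoid M] (F : ℕ → M) (a b : ℕ) :
    ∏ l ∈ Finset.Ioc (a+1) (b+1), F l = ∏ l ∈ Finset.Ioc a b, F (l+1) := by
  rw [← Finset.map_add_right_Ioc a b 1, Finset.prod_map]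
  rfl

lemma sum_shift {M : Type*} [AddCommMonoid M] (F : ℕ → M) (a b : ℕ) :
    ∑ l ∈ Finset.Ioc (a+1) (b+1), F l = ∑ l ∈ Finset.Ioc a b, F (l+1) := by
  rw [← Finset.map_add_right_Ioc a b 1, Finset.sum_map]
  rfl

lemma gpoly_Ioc (N i j : ℕ) :
    gpoly N i j = ∑ k ∈ Finset.Ioc 0 j, ∏ l ∈ Finset.Ioc j i, (xv N k - xv N l) := by
  rw [gpoly, Icc_one, Icc_pred i (by omega : 1 ≤ j + 1)]
  norm_num

lemma fpoly_Ioc (N i j : ℕ) :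
    fpoly N i j = ∑ k ∈ Finset.Ioc 0 j, (∏ l ∈ Finset.Ioc j i, (xv N k - xv N l)) * xv N k := by
  rw [fpoly, Icc_one, Icc_pred i (by omega : 1 ≤ j + 1)]
  norm_num

lemma prod_factor (N : ℕ) {i j : ℕ} (hj : 1 ≤ j) (hij : j ≤ i) (k : ℕ) :
    ∏ l ∈ Finset.Ioc (j-1) i, (xv N k - xv N l)
      = (xv N k - xv N j) * ∏ l ∈ Finset.Ioc j i, (xv N k - xv N l) := by
  rw [← Finset.prod_Ioc_consecutive _ (show j - 1 ≤ j by omega) hij,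
    Ioc_pred_singleton hj, Finset.prod_singleton]

lemma g_succ (N : ℕ) {i j : ℕ} (hj : 1 ≤ j) (hij : j ≤ i) :
    gpoly N (i+1) j = (xv N j - xv N (i+1)) * gpoly N i j + gpoly N i (j-1) := by
  have hj1 : j = (j - 1) + 1 := by omega
  have h3 : gpoly N i (j-1)
      = ∑ k ∈ Finset.Ioc 0 j, (xv N k - xv N j) * ∏ l ∈ Finset.Ioc j i, (xv N k - xv N l) := by
    rw [gpoly_Ioc,
      Finset.sum_congr rfl (fun k _ => prod_factor N hj hij k)]
    conv_rhs => rw [hj1]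
    rw [Finset.sum_Ioc_succ_top (by omega), ← hj1]
    simp
  rw [gpoly_Ioc, gpoly_Ioc, h3, Finset.mul_sum, ← Finset.sum_add_distrib]
  refine Finset.sum_congr rfl fun k _ => ?_
  rw [Finset.prod_Ioc_succ_top hij]
  ring

lemma f_succ (N : ℕ) {i j : ℕ} (hj : 1 ≤ j) (hij : j ≤ i) :
    fpoly N (i+1) j = (xv N j - xv N (i+1)) * fpoly N i j + fpoly N i (j-1) := by
  have hj1 : j = (j - 1) + 1 := by omega
  have h3 : fpoly N i (j-1)
      = ∑ k ∈ Finset.Ioc 0 j, ((xv N k - xv N j) * ∏ l ∈ Finset.Ioc j i, (xv N k - xv N l)) * xv N k := by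
    rw [fpoly_Ioc,
      Finset.sum_congr rfl (fun k (_ : k ∈ Finset.Ioc 0 (j-1)) => by rw [prod_factor N hj hij k])]
    conv_rhs => rw [hj1]
    rw [Finset.sum_Ioc_succ_top (by omega), ← hj1]
    simp
  rw [fpoly_Ioc, fpoly_Ioc, h3, Finset.mul_sum, ← Finset.sum_add_distrib]
  refine Finset.sum_congr rfl fun k _ => ?_
  rw [Finset.prod_Ioc_succ_top hij]
  ring

lemma f_eq_g (N : ℕ) {i j : ℕ} (hij : j ≤ i) :
    fpoly N i j = gpoly N (i+1) j + xv N (i+1) * gpoly N i j := by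
  rw [fpoly_Ioc, gpoly_Ioc, gpoly_Ioc, Finset.mul_sum, ← Finset.sum_add_distrib]
  refine Finset.sum_congr rfl fun k _ => ?_
  rw [Finset.prod_Ioc_succ_top hij]
  ring

section Stab
variable {N r' jmax : ℕ} {J : Ideal (MvPolynomial (Fin N) ℚ)} {a : ℕ → ℕ}

lemma gStab (haj : ∀ j, 1 ≤ j → j ≤ jmax → j ≤ a j)
    (hmono : ∀ j, 1 ≤ j → j < jmax → a j ≤ a (j+1))
    (hg : ∀ j, 1 ≤ j → j < r' → j ≤ jmax → gpoly N (a j) j ∈ J) :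
    ∀ j, j < r' → j ≤ jmax → ∀ i, (1 ≤ j → a j ≤ i) → gpoly N i j ∈ J := by
  intro j
  induction j using Nat.strong_induction_on with
  | _ j IH =>
    intro hjr hjmax i hai
    rcases Nat.eq_zero_or_pos j with h0 | h1
    · subst h0; rw [gpoly_zero]; exact J.zero_mem
    · refine Nat.le_induction (hg j h1 hjr hjmax) ?_ i (hai h1)
      intro i hi IHi
      have hji : j ≤ i := le_trans (haj j h1 hjmax) hi
      rw [g_succ N h1 hji]
      refine J.add_mem (J.mul_mem_left _ IHi) ?_
      refine IH (j-1) (by omega) (by omega) (by omega) i (fun h1' => ?_)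
      have := hmono (j-1) h1' (by omega)
      rw [Nat.sub_add_cancel h1] at this
      exact le_trans this hi

lemma fStab (hr' : 1 ≤ r')
    (haj : ∀ j, 1 ≤ j → j ≤ jmax → j ≤ a j)
    (hmono : ∀ j, 1 ≤ j → j < jmax → a j ≤ a (j+1))
    (hg : ∀ j, 1 ≤ j → j < r' → j ≤ jmax → gpoly N (a j) j ∈ J)
    (hf : ∀ j, r' ≤ j → j ≤ jmax → fpoly N (a j) j ∈ J) :
    ∀ j, r' ≤ j → j ≤ jmax → ∀ i, a j ≤ i → fpoly N i j ∈ J := by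
  intro j
  induction j using Nat.strong_induction_on with
  | _ j IH =>
    intro hjr hjmax i hai
    have h1 : 1 ≤ j := le_trans hr' hjr
    refine Nat.le_induction (hf j hjr hjmax) ?_ i hai
    intro i hi IHi
    have hji : j ≤ i := le_trans (haj j h1 hjmax) hi
    rw [f_succ N h1 hji]
    refine J.add_mem (J.mul_mem_left _ IHi) ?_
    rcases Nat.lt_or_ge r' j with hlt | hge
    · refine IH (j-1) (by omega) (by omega) (by omega) i ?_
      have := hmono (j-1) (by omega) (by omega)
      rw [Nat.sub_add_cancel h1] at this
      exact le_trans this hi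
    · have hjr' : j = r' := le_antisymm hge hjr
      rw [f_eq_g N (show j - 1 ≤ i by omega)]
      have hgs := gStab haj hmono hg (j-1) (by omega) (by omega)
      refine J.add_mem (hgs (i+1) ?_) (J.mul_mem_left _ (hgs i ?_)) <;>
      · intro h1'
        have := hmono (j-1) h1' (by omega)
        rw [Nat.sub_add_cancel h1] at this
        omega

end Stab

lemma phix {n s : ℕ} (hs1 : 1 ≤ s) (hsn : s ≤ n) {m : ℕ} (hm : 1 ≤ m) :
    phiMap n s (xv n m)
      = if m < s then xv (n-1) m else if m = s then 0 else xv (n-1) (m-1) := by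
  by_cases hmn : m - 1 < n
  · rw [xv, dif_pos hmn, phiMap, aeval_X]
    simp only [Fin.val_mk]
    rw [show m - 1 + 1 = m by omega]
  · rw [xv, dif_neg hmn, map_zero, if_neg (by omega), if_neg (by omega), xv,
      dif_neg (by omega)]

section Phi
variable {n s : ℕ}

lemma phi_g_low (hs1 : 1 ≤ s) (hsn : s ≤ n) {i m : ℕ} (hms : m < s) (his : i < s) :
    phiMap n s (gpoly n i m) = gpoly (n-1) i m := by
  rw [gpoly_Ioc, map_sum, gpoly_Ioc]
  refine Finset.sum_congr rfl fun k hk => ?_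
  obtain ⟨hk0, hkm⟩ := Finset.mem_Ioc.mp hk
  rw [map_prod]
  refine Finset.prod_congr rfl fun l hl => ?_
  obtain ⟨hl0, hli⟩ := Finset.mem_Ioc.mp hl
  rw [map_sub, phix hs1 hsn (by omega : 1 ≤ k), phix hs1 hsn (by omega : 1 ≤ l),
    if_pos (by omega : k < s), if_pos (by omega : l < s)]

lemma phi_g_mid (hs1 : 1 ≤ s) (hsn : s ≤ n) {i m : ℕ} (hm : 1 ≤ m) (hms : m < s)
    (hsi : s ≤ i) :
    phiMap n s (gpoly n i m) = fpoly (n-1) (i-1) m := by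
  rw [gpoly_Ioc, map_sum, fpoly_Ioc]
  refine Finset.sum_congr rfl fun k hk => ?_
  obtain ⟨hk0, hkm⟩ := Finset.mem_Ioc.mp hk
  have hks : k < s := by omega
  rw [map_prod]
  have hfac : ∀ l ∈ Finset.Ioc m i, phiMap n s (xv n k - xv n l)
      = xv (n-1) k - (if l < s then xv (n-1) l else if l = s then 0 else xv (n-1) (l-1)) := by
    intro l hl
    obtain ⟨hl0, hli⟩ := Finset.mem_Ioc.mp hl
    rw [map_sub, phix hs1 hsn (by omega : 1 ≤ k), phix hs1 hsn (by omega : 1 ≤ l),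
      if_pos hks]
  rw [Finset.prod_congr rfl hfac]
  rw [← Finset.prod_Ioc_consecutive _ (by omega : m ≤ s) hsi]
  have e1 : ∏ l ∈ Finset.Ioc m s,
      (xv (n-1) k - (if l < s then xv (n-1) l else if l = s then 0 else xv (n-1) (l-1)))
      = (∏ l ∈ Finset.Ioc m (s-1), (xv (n-1) k - xv (n-1) l)) * xv (n-1) k := by
    rw [show s = (s-1)+1 by omega, Finset.prod_Ioc_succ_top (by omega : m ≤ s - 1)]
    rw [show s - 1 + 1 = s by omega]
    rw [if_neg (by omega), if_pos rfl, sub_zero]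
    refine congrArg (· * xv (n-1) k) ?_
    refine Finset.prod_congr rfl fun l hl => ?_
    obtain ⟨hl0, hli⟩ := Finset.mem_Ioc.mp hl
    rw [if_pos (by omega : l < s)]
  have e2 : ∏ l ∈ Finset.Ioc s i,
      (xv (n-1) k - (if l < s then xv (n-1) l else if l = s then 0 else xv (n-1) (l-1)))
      = ∏ l ∈ Finset.Ioc (s-1) (i-1), (xv (n-1) k - xv (n-1) l) := by
    rw [show s = (s-1)+1 by omega, show i = (i-1)+1 by omega, prod_shift]
    refine Finset.prod_congr (by rw [show (s-1)+1-1 = s-1 by omega, show (i-1)+1-1 = i-1 by omega]) fun l hl => ?_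
    obtain ⟨hl0, hli⟩ := Finset.mem_Ioc.mp hl
    rw [if_neg (by omega), if_neg (by omega), show l + 1 - 1 = l by omega]
  rw [e1, e2, mul_right_comm,
    Finset.prod_Ioc_consecutive _ (by omega : m ≤ s - 1) (by omega : s - 1 ≤ i - 1)]

lemma phi_f_high (hs1 : 1 ≤ s) (hsn : s ≤ n) {i m : ℕ} (hsm : s ≤ m) (hmi : m ≤ i) :
    phiMap n s (fpoly n i m) = fpoly (n-1) (i-1) (m-1) := by
  rw [fpoly_Ioc, map_sum, fpoly_Ioc]
  have hterm : ∀ k ∈ Finset.Ioc 0 m,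
      phiMap n s ((∏ l ∈ Finset.Ioc m i, (xv n k - xv n l)) * xv n k)
      = (∏ l ∈ Finset.Ioc (m-1) (i-1),
          (phiMap n s (xv n k) - xv (n-1) l)) * phiMap n s (xv n k) := by
    intro k hk
    obtain ⟨hk0, hkm⟩ := Finset.mem_Ioc.mp hk
    rw [map_mul, map_prod]
    refine congrArg (· * phiMap n s (xv n k)) ?_
    have : ∀ l ∈ Finset.Ioc m i, phiMap n s (xv n k - xv n l)
        = phiMap n s (xv n k) - xv (n-1) (l-1) := by
      intro l hl
      obtain ⟨hl0, hli⟩ := Finset.mem_Ioc.mp hl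
      rw [map_sub, phix hs1 hsn (by omega : 1 ≤ l), if_neg (by omega), if_neg (by omega)]
    rw [Finset.prod_congr rfl this, show m = (m-1)+1 by omega, show i = (i-1)+1 by omega,
      prod_shift]
    refine Finset.prod_congr (by rw [show (m-1)+1-1 = m-1 by omega, show (i-1)+1-1 = i-1 by omega]) fun l hl => ?_
    rw [show l + 1 - 1 = l by omega]
  rw [Finset.sum_congr rfl hterm]
  rw [← Finset.sum_Ioc_consecutive _ (by omega : 0 ≤ s) (by omega : s ≤ m)]
  have e1 : ∑ k ∈ Finset.Ioc 0 s,
      (∏ l ∈ Finset.Ioc (m-1) (i-1), (phiMap n s (xv n k) - xv (n-1) l)) * phiMap n s (xv n k)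
      = ∑ k ∈ Finset.Ioc 0 (s-1),
        (∏ l ∈ Finset.Ioc (m-1) (i-1), (xv (n-1) k - xv (n-1) l)) * xv (n-1) k := by
    rw [show s = (s-1)+1 by omega, Finset.sum_Ioc_succ_top (by omega : 0 ≤ s-1),
      show s - 1 + 1 = s by omega]
    rw [phix hs1 hsn hs1, if_neg (by omega), if_pos rfl, mul_zero, add_zero]
    refine Finset.sum_congr rfl fun k hk => ?_
    obtain ⟨hk0, hks⟩ := Finset.mem_Ioc.mp hk
    rw [phix hs1 hsn (by omega : 1 ≤ k), if_pos (by omega : k < s)]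
  have e2 : ∑ k ∈ Finset.Ioc s m,
      (∏ l ∈ Finset.Ioc (m-1) (i-1), (phiMap n s (xv n k) - xv (n-1) l)) * phiMap n s (xv n k)
      = ∑ k ∈ Finset.Ioc (s-1) (m-1),
        (∏ l ∈ Finset.Ioc (m-1) (i-1), (xv (n-1) k - xv (n-1) l)) * xv (n-1) k := by
    have hshift := sum_shift (fun k =>
      (∏ l ∈ Finset.Ioc (m-1) (i-1), (phiMap n s (xv n k) - xv (n-1) l)) * phiMap n s (xv n k))
      (s-1) (m-1)
    rw [show (s-1)+1 = s by omega, show (m-1)+1 = m by omega] at hshift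
    rw [hshift]
    refine Finset.sum_congr rfl fun k hk => ?_
    obtain ⟨hk0, hkm⟩ := Finset.mem_Ioc.mp hk
    rw [phix hs1 hsn (by omega : 1 ≤ k + 1), if_neg (by omega), if_neg (by omega),
      show k + 1 - 1 = k by omega]
  rw [e1, e2, Finset.sum_Ioc_consecutive _ (by omega : 0 ≤ s - 1) (by omega : s - 1 ≤ m - 1)]

end Phi

/-- right inverse of `phiMap`. -/
noncomputable def psiMap (n s : ℕ) :
    MvPolynomial (Fin (n - 1)) ℚ →ₐ[ℚ] MvPolynomial (Fin n) ℚ :=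
  MvPolynomial.aeval fun k : Fin (n-1) =>
    if k.val + 1 < s then xv n (k.val + 1) else xv n (k.val + 2)

lemma xv_fin {N : ℕ} (k : Fin N) : xv N (k.val + 1) = X k := by
  have h1 : k.val + 1 - 1 < N := by simpa using k.isLt
  rw [xv, dif_pos h1]
  exact congrArg X (Fin.val_injective (show k.val + 1 - 1 = k.val by omega))

lemma phi_psi {n s : ℕ} (hs1 : 1 ≤ s) (hsn : s ≤ n) (p : MvPolynomial (Fin (n-1)) ℚ) :
    phiMap n s (psiMap n s p) = p := by
  have : (phiMap n s).comp (psiMap n s) = AlgHom.id ℚ _ := by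
    apply MvPolynomial.algHom_ext
    intro k
    have hk : k.val < n - 1 := k.isLt
    simp only [AlgHom.comp_apply, psiMap, aeval_X, AlgHom.id_apply]
    split_ifs with hks
    · rw [phix hs1 hsn (by omega), if_pos hks]
      exact xv_fin k
    · rw [phix hs1 hsn (by omega : 1 ≤ k.val + 2), if_neg (by omega), if_neg (by omega),
        show k.val + 2 - 1 = k.val + 1 by omega]
      exact xv_fin k
  simpa using DFunLike.congr_fun this p

lemma phi_surj {n s : ℕ} (hs1 : 1 ≤ s) (hsn : s ≤ n) :
    Function.Surjective (phiMap n s) :=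
  fun p => ⟨psiMap n s p, phi_psi hs1 hsn p⟩

lemma xv_s_eq_X {n s : ℕ} (hs1 : 1 ≤ s) (hsn : s ≤ n) :
    xv n s = X (⟨s - 1, by omega⟩ : Fin n) := dif_pos (by omega)

lemma phi_xv_s {n s : ℕ} (hs1 : 1 ≤ s) (hsn : s ≤ n) : phiMap n s (xv n s) = 0 := by
  rw [phix hs1 hsn hs1, if_neg (by omega), if_pos rfl]

lemma ker_phi_le {n s : ℕ} (hs1 : 1 ≤ s) (hsn : s ≤ n) (p : MvPolynomial (Fin n) ℚ)
    (hp : phiMap n s p = 0) : p ∈ Ideal.span {xv n s} := by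
  have key : (Ideal.Quotient.mkₐ ℚ (Ideal.span {xv n s})).comp
      ((psiMap n s).comp (phiMap n s)) = Ideal.Quotient.mkₐ ℚ (Ideal.span {xv n s}) := by
    apply MvPolynomial.algHom_ext
    intro k
    have hk : k.val < n := k.isLt
    simp only [AlgHom.comp_apply, Ideal.Quotient.mkₐ_eq_mk]
    rw [show phiMap n s (X k) = phiMap n s (xv n (k.val + 1)) by rw [xv_fin],
      phix hs1 hsn (by omega)]
    rcases lt_trichotomy (k.val + 1) s with hlt | heq | hgt
    · rw [if_pos hlt]
      have hk1 : k.val < n - 1 := by omega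
      rw [show xv (n-1) (k.val + 1) = X (⟨k.val, hk1⟩ : Fin (n-1)) from xv_fin ⟨k.val, hk1⟩]
      rw [psiMap, aeval_X]
      simp only [Fin.val_mk]
      rw [if_pos hlt, xv_fin]
    · rw [if_neg (by omega), if_pos heq, map_zero, map_zero]
      symm
      rw [Ideal.Quotient.eq_zero_iff_mem]
      have : X k = xv n s := by
        rw [xv_s_eq_X hs1 hsn]
        exact congrArg X (Fin.val_injective (show (k : ℕ) = s - 1 by omega))
      rw [this]
      exact Ideal.subset_span rfl
    · rw [if_neg (by omega), if_neg (by omega), Nat.add_sub_cancel]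
      have hk1 : k.val - 1 < n - 1 := by omega
      have hxk : xv (n-1) (k.val) = X (⟨k.val - 1, hk1⟩ : Fin (n-1)) := by
        conv_lhs => rw [show (k.val : ℕ) = (k.val - 1) + 1 by omega]
        exact xv_fin ⟨k.val - 1, hk1⟩
      rw [hxk]
      rw [psiMap, aeval_X]
      simp only [Fin.val_mk]
      rw [if_neg (by omega), show k.val - 1 + 2 = k.val + 1 by omega, xv_fin]
  have := congrArg (fun (F : MvPolynomial (Fin n) ℚ →ₐ[ℚ] _) => F p) key
  simp only [AlgHom.comp_apply, Ideal.Quotient.mkₐ_eq_mk, hp, map_zero] at this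
  rw [← Ideal.Quotient.eq_zero_iff_mem, ← this]

end HessAux

/-- `A^h_s / ⟨x_s⟩ ≅ A^{h⁽ˢ⁾}_{r_s}`, induced by `φ`. -/
theorem quotient_iso_smaller_hessenberg (n : ℕ) (hn : 2 ≤ n) (h : ℕ → ℕ)
    (hh : IsHessenberg n h) (s : ℕ) (hs1 : 1 ≤ s)
    (hsp : s ≤ sInf {m | 1 ≤ m ∧ m ≤ n ∧ h m = m})
    (r : ℕ) (hr : r = sInf {m | 1 ≤ m ∧ m ≤ n ∧ s ≤ h m})
    (hs : ℕ → ℕ)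
    (hhs : ∀ m, hs m =
      if m ≤ r - 1 then h m else if m ≤ s - 1 then h m - 1 else h (m + 1) - 1) :
    ∃ e : (MvPolynomial (Fin n) ℚ ⧸
            (Ideal.span
              ((fun m => if m < s then gpoly n (h m) m else fpoly n (h m) m) ''
                Set.Icc 1 n) ⊔ Ideal.span {xv n s})) ≃+*
          (MvPolynomial (Fin (n - 1)) ℚ ⧸
            Ideal.span
              ((fun m =>
                  if m < r then gpoly (n - 1) (hs m) m else fpoly (n - 1) (hs m) m) ''
                Set.Icc 1 (n - 1))),
      ∀ p, e (Ideal.Quotient.mk _ p) = Ideal.Quotient.mk _ (phiMap n s p) := by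
  obtain ⟨hh1, hh2⟩ := hh
  -- basic facts
  have hnn : h n = n := by
    have := hh1 n (by omega) le_rfl
    omega
  have hsn : s ≤ n := le_trans hsp (Nat.sInf_le ⟨by omega, le_rfl, hnn⟩)
  have hmono : ∀ a b, 1 ≤ a → a ≤ b → b ≤ n → h a ≤ h b := by
    intro a b h1 hab hbn
    induction b with
    | zero => omega
    | succ b IH =>
      rcases Nat.lt_or_ge a (b+1) with hlt | hge
      · exact le_trans (IH (by omega) (by omega)) (hh2 b (by omega) (by omega))
      · have : a = b + 1 := by omega
        subst this
        exact le_rfl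
  have hproper : ∀ m, 1 ≤ m → m < s → m < h m := by
    intro m h1 hms
    by_contra hc
    have hm : h m = m := le_antisymm (by omega) (hh1 m h1 (by omega)).1
    have : sInf {m | 1 ≤ m ∧ m ≤ n ∧ h m = m} ≤ m := Nat.sInf_le ⟨h1, by omega, hm⟩
    omega
  have hrmem : r ∈ {m | 1 ≤ m ∧ m ≤ n ∧ s ≤ h m} := by
    rw [hr]
    exact Nat.sInf_mem ⟨s, ⟨hs1, hsn, (hh1 s hs1 hsn).1⟩⟩
  obtain ⟨hr1, hrn, hrs⟩ := hrmem
  have hrles : r ≤ s := by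
    rw [hr]
    exact Nat.sInf_le ⟨hs1, hsn, (hh1 s hs1 hsn).1⟩
  have hlow : ∀ m, 1 ≤ m → m < r → h m < s := by
    intro m h1 hmr
    by_contra hc
    have : r ≤ m := by rw [hr]; exact Nat.sInf_le ⟨h1, by omega, by omega⟩
    omega
  have hhigh : ∀ m, r ≤ m → m ≤ n → s ≤ h m := fun m hm hmn =>
    le_trans hrs (hmono r m hr1 hm hmn)
  have hrs1 : 2 ≤ s → r ≤ s - 1 := by
    intro h2
    rw [hr]
    refine Nat.sInf_le ⟨by omega, by omega, ?_⟩
    have := hproper (s-1) (by omega) (by omega)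
    omega
  -- notation
  set F : ℕ → MvPolynomial (Fin n) ℚ :=
    fun m => if m < s then gpoly n (h m) m else fpoly n (h m) m with hF
  set G : ℕ → MvPolynomial (Fin (n-1)) ℚ :=
    fun m => if m < r then gpoly (n-1) (hs m) m else fpoly (n-1) (hs m) m with hG
  set J : Ideal (MvPolynomial (Fin (n-1)) ℚ) := Ideal.span (G '' Set.Icc 1 (n-1)) with hJ
  set K : Ideal (MvPolynomial (Fin n) ℚ) :=
    Ideal.span (F '' Set.Icc 1 n) ⊔ Ideal.span {xv n s} with hK
  set φ : MvPolynomial (Fin n) ℚ →+* MvPolynomial (Fin (n-1)) ℚ := (phiMap n s).toRingHom with hφ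
  have hφapp : ∀ p, φ p = phiMap n s p := fun p => rfl
  -- images of the generators, the matching part
  have himg_low : ∀ m, 1 ≤ m → m < r → phiMap n s (F m) = G m := by
    intro m h1 hmr
    have hhm : h m < s := hlow m h1 hmr
    simp only [hF, hG, if_pos (show m < s by omega), if_pos hmr]
    rw [phi_g_low hs1 hsn (by omega) hhm, hhs m, if_pos (by omega)]
  have himg_mid : ∀ m, r ≤ m → m < s → phiMap n s (F m) = G m := by
    intro m hrm hms
    have h1 : 1 ≤ m := le_trans hr1 hrm
    simp only [hF, hG, if_pos hms, if_neg (show ¬ m < r by omega)]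
    rw [phi_g_mid hs1 hsn h1 hms (hhigh m hrm (by omega)), hhs m,
      if_neg (by omega), if_pos (by omega)]
  have himg_high : ∀ m, s < m → m ≤ n → phiMap n s (F m) = G (m-1) := by
    intro m hsm hmn
    simp only [hF, hG, if_neg (show ¬ m < s by omega), if_neg (show ¬ m - 1 < r by omega)]
    rw [phi_f_high hs1 hsn (by omega) (hh1 m (by omega) hmn).1, hhs (m-1),
      if_neg (by omega), if_neg (by omega), show m - 1 + 1 = m by omega]
  -- the extra generator at m = s lands in J
  have hextra : phiMap n s (F s) = fpoly (n-1) (h s - 1) (s - 1) := by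
    simp only [hF, if_neg (lt_irrefl s)]
    exact phi_f_high hs1 hsn le_rfl (hh1 s hs1 hsn).1
  have hGmemJ : ∀ m, 1 ≤ m → m ≤ n - 1 → G m ∈ J := by
    intro m h1 hmn
    exact Ideal.subset_span ⟨m, ⟨h1, hmn⟩, rfl⟩
  have hextraJ : fpoly (n-1) (h s - 1) (s - 1) ∈ J := by
    rcases Nat.lt_or_ge s 2 with hs2 | hs2
    · have : s = 1 := by omega
      rw [this]
      norm_num [fpoly_zero]
    · have hrs1' : r ≤ s - 1 := hrs1 hs2
      refine fStab (N := n-1) (r' := r) (jmax := s - 1) (a := hs) hr1 ?_ ?_ ?_ ?_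
        (s-1) hrs1' le_rfl (h s - 1) ?_
      · -- j ≤ hs j
        intro j h1 hjm
        rw [hhs j]
        have hx := (hh1 j h1 (by omega)).1
        have hy := hproper j h1 (by omega)
        split_ifs <;> omega
      · -- monotone
        intro j h1 hjm
        rw [hhs j, hhs (j+1)]
        have hmj : h j ≤ h (j+1) := hh2 j h1 (by omega)
        rcases Nat.lt_or_ge j r with hjr | hjr
        · rw [if_pos (by omega : j ≤ r - 1)]
          rcases Nat.lt_or_ge (j+1) r with hjr2 | hjr2
          · rw [if_pos (by omega)]
            exact hmj
          · rw [if_neg (by omega), if_pos (by omega)]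
            have hx1 : h j < s := hlow j h1 hjr
            have hx2 : s ≤ h (j+1) := hhigh (j+1) (by omega) (by omega)
            omega
        · rw [if_neg (by omega), if_pos (by omega), if_neg (by omega), if_pos (by omega)]
          omega
      · -- g generators
        intro j h1 hjr hjm
        have := hGmemJ j h1 (by omega)
        simpa only [hG, if_pos hjr] using this
      · -- f generators
        intro j hjr hjm
        have h1 : 1 ≤ j := le_trans hr1 hjr
        have := hGmemJ j h1 (by omega)
        simpa only [hG, if_neg (show ¬ j < r by omega)] using this
      · -- hs (s-1) ≤ h s - 1
        rw [hhs (s-1), if_neg (by omega), if_pos (by omega)]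
        have := hmono (s-1) s (by omega) (by omega) hsn
        omega
  -- map φ K = J
  have hmapK : Ideal.map φ K = J := by
    rw [hK, Ideal.map_sup, Ideal.map_span, Ideal.map_span, Set.image_singleton,
      hφapp, phi_xv_s hs1 hsn]
    have hz : Ideal.span ({0} : Set (MvPolynomial (Fin (n-1)) ℚ)) = ⊥ := by
      simp
    rw [hz, sup_bot_eq, ← Set.image_comp]
    apply le_antisymm
    · rw [Ideal.span_le]
      rintro x ⟨m, ⟨h1, hmn⟩, rfl⟩
      simp only [Function.comp_apply, hφapp]
      rcases Nat.lt_or_ge m r with hmr | hmr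
      · rw [himg_low m h1 hmr]
        exact hGmemJ m h1 (by omega)
      rcases Nat.lt_or_ge m s with hms | hms
      · rw [himg_mid m hmr hms]
        exact hGmemJ m h1 (by omega)
      rcases Nat.eq_or_lt_of_le hms with heq | hlt
      · rw [← heq, hextra]
        exact hextraJ
      · rw [himg_high m hlt hmn]
        exact hGmemJ (m-1) (by omega) (by omega)
    · rw [hJ, Ideal.span_le]
      rintro x ⟨m, ⟨h1, hmn⟩, rfl⟩
      have hmem : ∀ m', 1 ≤ m' → m' ≤ n → (φ ∘ F) m' ∈
          Ideal.span ((φ ∘ F) '' Set.Icc 1 n) :=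
        fun m' h1' hmn' => Ideal.subset_span ⟨m', ⟨h1', hmn'⟩, rfl⟩
      rcases Nat.lt_or_ge m r with hmr | hmr
      · rw [← himg_low m h1 hmr]
        exact hmem m h1 (by omega)
      rcases Nat.lt_or_ge m s with hms | hms
      · rw [← himg_mid m hmr hms]
        exact hmem m h1 (by omega)
      · have : G m = (φ ∘ F) (m+1) := by
          simp only [Function.comp_apply, hφapp]
          rw [himg_high (m+1) (by omega) (by omega), show m + 1 - 1 = m from rfl]
        rw [this]
        exact hmem (m+1) (by omega) (by omega)
  -- the composite ring hom and its kernel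
  set Φ : MvPolynomial (Fin n) ℚ →+* (MvPolynomial (Fin (n-1)) ℚ ⧸ J) :=
    (Ideal.Quotient.mk J).comp φ with hΦ
  have hΦsurj : Function.Surjective Φ :=
    show Function.Surjective (⇑(Ideal.Quotient.mk J) ∘ ⇑φ) from
      Function.Surjective.comp Ideal.Quotient.mk_surjective (phi_surj hs1 hsn)
  have hkerΦ : RingHom.ker Φ = K := by
    have h1 : RingHom.ker Φ = Ideal.comap φ J := by
      ext p
      simp only [RingHom.mem_ker, hΦ, RingHom.comp_apply, Ideal.Quotient.eq_zero_iff_mem,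
        Ideal.mem_comap]
    rw [h1, ← hmapK, Ideal.comap_map_of_surjective φ (phi_surj hs1 hsn)]
    refine sup_eq_left.mpr ?_
    intro p hp
    have hp0 : phiMap n s p = 0 := by
      have h0 : φ p = 0 := by simpa [Ideal.mem_comap] using hp
      exact h0
    exact Submodule.mem_sup_right (ker_phi_le hs1 hsn p hp0)
  refine ⟨(Ideal.quotEquivOfEq hkerΦ.symm).trans
    (RingHom.quotientKerEquivOfSurjective hΦsurj), fun p => ?_⟩
  simp only [RingEquiv.trans_apply, Ideal.quotEquivOfEq_mk]
  show RingHom.kerLift Φ (Ideal.Quotient.mk _ p) = _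
  rw [RingHom.kerLift_mk]
  rfl
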